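/- arXiv:1903.06477 — 3 statements merged into one kernel-verified Lean document; each statement's English description precedes it below -/
import Mathlib

section
/- If (χ, ψ, τ, ς, κ) solves the homogeneous self-dual embedding with τ > 0 and κ = 0, then the triplet (x, y, s) = (χ/τ, ψ/τ, ς/τ) satisfies the KKT conditions of the cone program: Ax + s = b, s ∈ K, y ∈ K*, Aᵀy + c = 0, and ⟨y, s⟩ = 0. -/
open Matrix

/-- If `(χ, ψ, τ, ς, κ)` solves the HSDE with `τ > 0` and `κ = 0`,
then `(x, y, s) = (χ/τ, ψ/τ, ς/τ)` satisfies the KKT conditions: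
`Ax + s = b`, `s ∈ K`, `y ∈ K*`, `Aᵀy + c = 0`, `⟨y, s⟩ = 0`. -/
theorem hsde_solution_gives_kkt {m n : ℕ}
    (A : Matrix (Fin m) (Fin n) ℝ) (b : Fin m → ℝ) (c : Fin n → ℝ)
    (K : Set (Fin m → ℝ))
    (hne : K.Nonempty) (hcl : IsClosed K) (hconv : Convex ℝ K)
    (hcone : ∀ s ∈ K, ∀ r : ℝ, 0 < r → r • s ∈ K)
    (χ : Fin n → ℝ) (ψ : Fin m → ℝ) (τ : ℝ) (ς : Fin m → ℝ) (κ : ℝ)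
    (h1 : Aᵀ.mulVec ψ + τ • c = 0)
    (h2 : -(A.mulVec χ) + τ • b = ς)
    (h3 : -(c ⬝ᵥ χ) - b ⬝ᵥ ψ = κ)
    (hς : ς ∈ K) (hψ : ∀ s ∈ K, ψ ⬝ᵥ s ≥ 0) (hτpos : 0 < τ) (hκ : κ = 0)
    (x : Fin n → ℝ) (y : Fin m → ℝ) (s : Fin m → ℝ)
    (hx : x = τ⁻¹ • χ) (hy : y = τ⁻¹ • ψ) (hs : s = τ⁻¹ • ς) :
    A.mulVec x + s = b ∧ s ∈ K ∧ (∀ s' ∈ K, y ⬝ᵥ s' ≥ 0) ∧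
      Aᵀ.mulVec y + c = 0 ∧ y ⬝ᵥ s = 0 := by
  have hτne : τ ≠ 0 := ne_of_gt hτpos
  have hτinv : 0 < τ⁻¹ := inv_pos.mpr hτpos
  refine ⟨?_, ?_, ?_, ?_, ?_⟩
  · subst hx hs
    rw [Matrix.mulVec_smul]
    rw [← h2]
    ext i
    simp [smul_add, mul_add]
    field_simp
  · subst hs; exact hcone ς hς τ⁻¹ hτinv
  · intro s' hs'
    subst hy
    rw [smul_dotProduct]
    exact mul_nonneg (le_of_lt hτinv) (hψ s' hs')
  · subst hy
    rw [Matrix.mulVec_smul]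
    have : Aᵀ.mulVec ψ = -(τ • c) := by
      have := h1; linear_combination (norm := (ext i; simp; try ring_nf)) this
    rw [this]
    ext i
    simp
    field_simp
    ring
  · subst hy hs
    have hAtψ : Aᵀ.mulVec ψ = -(τ • c) := by
      have := h1; linear_combination (norm := (ext i; simp; try ring_nf)) this
    have hψς : ψ ⬝ᵥ ς = 0 := by
      have h2' : ψ ⬝ᵥ ς = ψ ⬝ᵥ (-(A.mulVec χ) + τ • b) := by rw [h2]
      rw [dotProduct_add, dotProduct_neg, dotProduct_mulVec,
        ← Matrix.mulVec_transpose] at h2'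
      have hv : Aᵀ *ᵥ ψ ⬝ᵥ χ = -(τ • c) ⬝ᵥ χ := by rw [hAtψ]
      have hsc : ψ ⬝ᵥ (τ • b) = τ * (b ⬝ᵥ ψ) := by
        rw [dotProduct_smul, dotProduct_comm]; simp
      have hcb : c ⬝ᵥ χ + b ⬝ᵥ ψ = 0 := by
        have := h3; rw [hκ] at this; linarith
      rw [h2', hv, hsc]
      simp [neg_dotProduct, smul_dotProduct]
      nlinarith [hcb]
    rw [smul_dotProduct, dotProduct_smul, hψς]
    simp
end

section
/- The Douglas–Rachford operator of SuperSCS is firmly nonexpansive: let Q : ℝ^N → ℝ^N be a skew-symmetric linear map, C ⊆ ℝ^N a nonempty closed convex set, P = (I + Q)^{-1}, and define T(u) = u + Π_C(2Pu − u) − Pu. Then for all u, v ∈ ℝ^N, ⟨Tu − Tv, u − v⟩ ≥ ‖Tu − Tv‖². -/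
open scoped RealInnerProductSpace

private lemma aux_inner1 {N : ℕ} (s t a b : EuclideanSpace ℝ (Fin N)) :
    ⟪a - b, s - t⟫ - ⟪a - b, a - b⟫ = -(⟪s - a, b - a⟫ + ⟪t - b, a - b⟫) := by
  simp only [inner_sub_left, inner_sub_right]
  linear_combination 2*real_inner_comm s a + 2*real_inner_comm b s + 2*real_inner_comm a t + 2*real_inner_comm t b + 4*real_inner_comm b a + (real_inner_comm a b) - (real_inner_comm b a) + real_inner_comm a s + real_inner_comm s b + real_inner_comm t a + real_inner_comm b t + 2*real_inner_comm a b

private lemma aux_inner2 {N : ℕ} (w d e : EuclideanSpace ℝ (Fin N)) :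
    ⟪w + d - e, w⟫ - ⟪w + d - e, w + d - e⟫
      = (⟪d, (e + e) - w⟫ - ⟪d, d⟫) + (⟪e, w⟫ - ⟪e, e⟫) := by
  simp only [inner_sub_left, inner_sub_right, inner_add_left, inner_add_right]
  linear_combination 4*real_inner_comm e w + 2*real_inner_comm e d + (real_inner_comm w d) - (real_inner_comm e w) + 2 * (real_inner_comm d e) + 2*real_inner_comm w e + real_inner_comm d e

/-- The Douglas–Rachford operator of SuperSCS is firmly nonexpansive:
with `Q` skew-symmetric linear, `C` nonempty closed convex, `P = (I + Q)⁻¹`,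
`Π_C` the Euclidean projection onto `C`, and `T u = u + Π_C(2Pu − u) − Pu`,
one has `⟪Tu − Tv, u − v⟫ ≥ ‖Tu − Tv‖²` for all `u, v`. -/
theorem superscs_dr_operator_firmly_nonexpansive {N : ℕ}
    (Q : EuclideanSpace ℝ (Fin N) →ₗ[ℝ] EuclideanSpace ℝ (Fin N))
    (hskew : ∀ u v, ⟪Q u, v⟫ = -⟪u, Q v⟫)
    (C : Set (EuclideanSpace ℝ (Fin N)))
    (hne : C.Nonempty) (hcl : IsClosed C) (hconv : Convex ℝ C)
    (P : EuclideanSpace ℝ (Fin N) → EuclideanSpace ℝ (Fin N))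
    (hPright : ∀ u, P u + Q (P u) = u)
    (hPleft : ∀ u, P (u + Q u) = u)
    (proj : EuclideanSpace ℝ (Fin N) → EuclideanSpace ℝ (Fin N))
    (hprojC : ∀ x, proj x ∈ C)
    (hproj : ∀ x, ∀ v ∈ C, ⟪x - proj x, v - proj x⟫ ≤ 0)
    (T : EuclideanSpace ℝ (Fin N) → EuclideanSpace ℝ (Fin N))
    (hT : ∀ u, T u = u + proj (2 • P u - u) - P u) :
    ∀ u v, ⟪T u - T v, u - v⟫ ≥ ‖T u - T v‖ ^ 2 := by
  intro u v
  have skew_self : ∀ w : EuclideanSpace ℝ (Fin N), ⟪w, Q w⟫ = 0 := by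
    intro w
    have h := hskew w w
    have h2 : ⟪Q w, w⟫ = ⟪w, Q w⟫ := real_inner_comm _ _
    linarith
  -- fact 1: P is firmly nonexpansive (in fact, equality)
  have huv : u - v = (P u - P v) + Q (P u - P v) := by
    rw [map_sub]
    conv_lhs => rw [← hPright u, ← hPright v]
    abel
  have fact1 : ⟪P u - P v, u - v⟫ = ⟪P u - P v, P u - P v⟫ := by
    rw [huv, inner_add_right, skew_self, add_zero]
  set a := proj (2 • P u - u) with ha
  set b := proj (2 • P v - v) with hb
  have hx := hproj (2 • P u - u) b (hprojC (2 • P v - v))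
  have hy := hproj (2 • P v - v) a (hprojC (2 • P u - u))
  have fact2 : ⟪a - b, (2 • P u - u) - (2 • P v - v)⟫ ≥ ⟪a - b, a - b⟫ := by
    have e1 := aux_inner1 (2 • P u - u) (2 • P v - v) a b
    linarith
  have hTuv : T u - T v = (u - v) + (a - b) - (P u - P v) := by
    rw [hT u, hT v, ← ha, ← hb]
    abel
  have hst : (2 • P u - u) - (2 • P v - v) = ((P u - P v) + (P u - P v)) - (u - v) := by
    rw [two_nsmul, two_nsmul]
    abel
  have key := aux_inner2 (u - v) (a - b) (P u - P v)
  rw [← hst] at key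
  rw [hTuv, ← real_inner_self_eq_norm_sq]
  linarith
end

section
/- Powell's modification guarantees a uniformly nonzero update coefficient: let θ̄ ∈ (0,1) and γ ∈ ℝ, and define θ = 1 if |γ| ≥ θ̄, and θ = (1 − sgn(γ)·θ̄)/(1 − γ) otherwise, with the convention sgn(0) = 1. Then |(1 − θ) + θγ| ≥ θ̄. -/
/-- Powell's modification guarantees a uniformly nonzero update
coefficient: for `θ̄ ∈ (0,1)` and `γ ∈ ℝ`, with `θ = 1` if `|γ| ≥ θ̄` and
`θ = (1 − sgn(γ)·θ̄)/(1 − γ)` otherwise (convention `sgn(0) = 1`), one has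
`|(1 − θ) + θγ| ≥ θ̄`. -/
theorem powell_trick_coefficient_bound (θbar γ : ℝ)
    (hθbar0 : 0 < θbar) (hθbar1 : θbar < 1)
    (θ : ℝ)
    (hθ : θ = if θbar ≤ |γ| then 1
          else (1 - (if γ < 0 then (-1 : ℝ) else 1) * θbar) / (1 - γ)) :
    θbar ≤ |(1 - θ) + θ * γ| := by
  by_cases h : θbar ≤ |γ|
  · simp [hθ, h]

  · push_neg at h
    have hγ1 : γ < 1 := lt_of_le_of_lt (le_abs_self γ) (h.trans hθbar1)
    have hne : (1 : ℝ) - γ ≠ 0 := by linarith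
    rw [hθ, if_neg (not_le.mpr h)]
    have key : (1 - (1 - (if γ < 0 then (-1 : ℝ) else 1) * θbar) / (1 - γ))
        + ((1 - (if γ < 0 then (-1 : ℝ) else 1) * θbar) / (1 - γ)) * γ
        = (if γ < 0 then (-1 : ℝ) else 1) * θbar := by
      field_simp
      by_cases hγ : γ < 0 <;> simp [hγ] <;> ring
    rw [key]
    by_cases hγ : γ < 0 <;> simp [hγ, abs_of_pos hθbar0, le_abs_self]
end
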